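/- arXiv:1910.03142 — 2 statements merged into one kernel-verified Lean document; each statement's English description precedes it below -/
import Mathlib

section
/- Let p < 1/6, let m ≥ 1 and let x be a nonzero integer with P(X_m = x) > 0. For the elephant random walk, conditionally on {X_m = x}, the hitting time τ_0 = inf{n ≥ m : X_n = 0} of the origin is almost surely finite; in particular the ERW is positive recurrent. -/
open MeasureTheory Filter
open scoped NNReal ENNReal Topology

/-- The natural filtration generated by the steps `η 1, …, η n`. -/
noncomputable def erwFil {Ω : Type*} (η : ℕ → Ω → ℝ) (n : ℕ) : MeasurableSpace Ω :=
  ⨆ k ∈ Finset.Icc 1 n, MeasurableSpace.comap (η k) Real.measurableSpace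

/-- The position of the elephant random walk after `n` steps. -/
noncomputable def erwX {Ω : Type*} (η : ℕ → Ω → ℝ) (n : ℕ) (ω : Ω) : ℝ :=
  ∑ k ∈ Finset.Icc 1 n, η k ω

section aux
variable {Ω : Type*} {η : ℕ → Ω → ℝ}

lemma erwX_succ (n : ℕ) (ω : Ω) : erwX η (n + 1) ω = erwX η n ω + η (n + 1) ω := by
  simp [erwX, Finset.sum_Icc_succ_top (Nat.le_add_left 1 n)]

lemma erwX_int (hpm : ∀ k, 1 ≤ k → ∀ ω, η k ω = 1 ∨ η k ω = -1) (n : ℕ) (ω : Ω) :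
    ∃ z : ℤ, erwX η n ω = (z : ℝ) := by
  induction n with
  | zero => exact ⟨0, by simp [erwX]⟩
  | succ n ih =>
    obtain ⟨z, hz⟩ := ih
    rcases hpm (n + 1) (Nat.le_add_left 1 n) ω with he | he
    · exact ⟨z + 1, by rw [erwX_succ, hz, he]; push_cast; ring⟩
    · exact ⟨z - 1, by rw [erwX_succ, hz, he]; push_cast; ring⟩

lemma abs_erwX_le (hpm : ∀ k, 1 ≤ k → ∀ ω, η k ω = 1 ∨ η k ω = -1) (n : ℕ) (ω : Ω) :
    |erwX η n ω| ≤ (n : ℝ) := by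
  calc |erwX η n ω| ≤ ∑ k ∈ Finset.Icc 1 n, |η k ω| := Finset.abs_sum_le_sum_abs _ _
    _ ≤ ∑ k ∈ Finset.Icc 1 n, (1 : ℝ) := by
        refine Finset.sum_le_sum fun k hk => ?_
        rcases hpm k (Finset.mem_Icc.1 hk).1 ω with he | he <;> simp [he]
    _ = n := by simp

lemma one_le_abs_erwX (hpm : ∀ k, 1 ≤ k → ∀ ω, η k ω = 1 ∨ η k ω = -1) {n : ℕ} {ω : Ω}
    (h0 : erwX η n ω ≠ 0) : 1 ≤ |erwX η n ω| := by
  obtain ⟨z, hz⟩ := erwX_int hpm n ω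
  rw [hz] at h0 ⊢
  rw [← Int.cast_abs]
  exact_mod_cast Int.one_le_abs (by exact_mod_cast h0)

lemma erwX_abs_step (hpm : ∀ k, 1 ≤ k → ∀ ω, η k ω = 1 ∨ η k ω = -1) {n : ℕ} {ω : Ω}
    (h0 : erwX η n ω ≠ 0) :
    |erwX η (n + 1) ω| =
      |erwX η n ω| + (if 0 < erwX η n ω then (1 : ℝ) else -1) * η (n + 1) ω := by
  have h1 := one_le_abs_erwX hpm h0
  rw [erwX_succ]
  rcases lt_or_gt_of_ne h0 with hs | hs
  · rw [abs_of_neg hs] at h1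
    rw [if_neg (not_lt.2 hs.le), abs_of_neg hs]
    rcases hpm (n + 1) (Nat.le_add_left 1 n) ω with he | he <;>
      rw [he, abs_of_nonpos (by linarith)] <;> ring
  · rw [abs_of_pos hs] at h1
    rw [if_pos hs, abs_of_pos hs]
    rcases hpm (n + 1) (Nat.le_add_left 1 n) ω with he | he <;>
      rw [he, abs_of_nonneg (by linarith)] <;> ring

end aux

section meas
variable {Ω : Type*} {η : ℕ → Ω → ℝ}

lemma erwFil_le [MeasurableSpace Ω] (hη : ∀ k, Measurable (η k)) (n : ℕ) :
    erwFil η n ≤ ‹MeasurableSpace Ω› :=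
  iSup₂_le fun k _ => (hη k).comap_le

lemma erwFil_mono {n n' : ℕ} (hnn : n ≤ n') : erwFil η n ≤ erwFil η n' := by
  refine iSup₂_le fun k hk => ?_
  exact le_iSup₂ (f := fun k (_ : k ∈ Finset.Icc 1 n') =>
    MeasurableSpace.comap (η k) Real.measurableSpace) k
    (Finset.mem_Icc.2 ⟨(Finset.mem_Icc.1 hk).1, (Finset.mem_Icc.1 hk).2.trans hnn⟩)

lemma meas_eta_fil {k n : ℕ} (hk : k ∈ Finset.Icc 1 n) : Measurable[erwFil η n] (η k) :=
  measurable_iff_comap_le.2 (le_iSup₂ (f := fun k (_ : k ∈ Finset.Icc 1 n) =>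
    MeasurableSpace.comap (η k) Real.measurableSpace) k hk)

lemma meas_erwX_fil (n : ℕ) : Measurable[erwFil η n] (erwX η n) :=
  Finset.measurable_sum _ fun k hk => meas_eta_fil hk

/-- The stopped process: `|X (m+n)|` frozen at `0` after the first visit of `0` at time `≥ m`. -/
noncomputable def erwG (η : ℕ → Ω → ℝ) (m : ℕ) : ℕ → Ω → ℝ
  | 0 => fun ω => |erwX η m ω|
  | n + 1 => fun ω => if erwG η m n ω = 0 then 0 else |erwX η (m + (n + 1)) ω|

lemma erwG_nonneg (m n : ℕ) (ω : Ω) : 0 ≤ erwG η m n ω := by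
  cases n with
  | zero => exact abs_nonneg _
  | succ n => by_cases h : erwG η m n ω = 0 <;> simp [erwG, h, abs_nonneg]

lemma erwG_of_ne_zero {m n : ℕ} {ω : Ω} (h : erwG η m n ω ≠ 0) :
    erwG η m n ω = |erwX η (m + n) ω| := by
  cases n with
  | zero => rfl
  | succ n =>
    by_cases h' : erwG η m n ω = 0
    · exact absurd (by simp [erwG, h']) h
    · simp [erwG, h']

lemma erwG_le (hpm : ∀ k, 1 ≤ k → ∀ ω, η k ω = 1 ∨ η k ω = -1) (m n : ℕ) (ω : Ω) :
    erwG η m n ω ≤ (m + n : ℝ) := by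
  by_cases h : erwG η m n ω = 0
  · rw [h]; positivity
  · rw [erwG_of_ne_zero h]
    calc |erwX η (m + n) ω| ≤ ((m + n : ℕ) : ℝ) := abs_erwX_le hpm _ ω
      _ = (m + n : ℝ) := by push_cast; ring

lemma meas_erwG_fil (m : ℕ) : ∀ n, Measurable[erwFil η (m + n)] (erwG η m n) := by
  intro n
  induction n with
  | zero =>
    letI : MeasurableSpace Ω := erwFil η (m + 0)
    exact ((meas_erwX_fil m).mono (erwFil_mono (Nat.le_add_right m 0)) le_rfl).abs
  | succ n ih =>
    letI : MeasurableSpace Ω := erwFil η (m + (n + 1))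
    have hset : MeasurableSet[erwFil η (m + (n + 1))] {ω | erwG η m n ω = 0} := by
      have h2 := ih.mono (erwFil_mono (by omega : m + n ≤ m + (n + 1))) le_rfl
      exact h2 (measurableSet_singleton 0)
    exact Measurable.ite hset measurable_const (meas_erwX_fil (m + (n + 1))).abs

lemma erwG_step (m n : ℕ) (ω : Ω)
    (hne : ∀ k, m ≤ k → erwX η k ω ≠ 0) :
    erwG η m n ω = |erwX η (m + n) ω| := by
  induction n with
  | zero => rfl
  | succ n ih =>
    have h0 : erwG η m n ω ≠ 0 := by
      rw [ih]; simpa using hne (m + n) (Nat.le_add_right m n)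
    simp [erwG, h0]

end meas

/-- `η` is an elephant random walk with memory parameter `p` and
first-step parameter `r` on the probability space `(Ω, μ)`. -/
structure IsERW {Ω : Type*} [MeasurableSpace Ω] (μ : Measure Ω) (p r : ℝ)
    (η : ℕ → Ω → ℝ) : Prop where
  prob : IsProbabilityMeasure μ
  p_mem : p ∈ Set.Icc (0 : ℝ) 1
  r_mem : r ∈ Set.Icc (0 : ℝ) 1
  meas : ∀ k, Measurable (η k)
  pm : ∀ k, 1 ≤ k → ∀ ω, η k ω = 1 ∨ η k ω = -1
  first : μ {ω | η 1 ω = 1} = ENNReal.ofReal r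
  cond : ∀ n, 1 ≤ n →
    μ[η (n + 1)|erwFil η n] =ᵐ[μ] fun ω => (2 * p - 1) * erwX η n ω / n

section main
variable {Ω : Type*} [MeasurableSpace Ω] {μ : Measure Ω} {p r : ℝ} {η : ℕ → Ω → ℝ}

lemma erw_hits (h : IsERW μ p r η) (hp : 2 * p - 1 ≤ 0) (m : ℕ) (hm : 1 ≤ m) :
    ∀ᵐ ω ∂μ, ∃ n : ℕ, m ≤ n ∧ erwX η n ω = 0 := by
  haveI := h.prob
  -- the (shifted) filtration
  set ℱ : Filtration ℕ ‹MeasurableSpace Ω› :=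
    ⟨fun n => erwFil η (m + n), fun i j hij => erwFil_mono (by omega),
      fun n => erwFil_le h.meas (m + n)⟩ with hℱ
  -- integrability
  have hint_eta : ∀ k, 1 ≤ k → Integrable (η k) μ := by
    intro k hk
    refine Integrable.mono' (integrable_const (1 : ℝ)) (h.meas k).aestronglyMeasurable ?_
    exact ae_of_all _ fun ω => by rcases h.pm k hk ω with he | he <;> simp [he]
  have hintX : ∀ N, Integrable (erwX η N) μ := by
    intro N
    refine Integrable.mono' (integrable_const (N : ℝ))
      ((Finset.measurable_sum _ fun k _ => h.meas k).aestronglyMeasurable) ?_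
    exact ae_of_all _ fun ω => by
      simpa [Real.norm_eq_abs] using abs_erwX_le h.pm N ω
  have hmeasG : ∀ n, Measurable (erwG η m n) :=
    fun n => (meas_erwG_fil m n).mono (erwFil_le h.meas (m + n)) le_rfl
  have hintG : ∀ n, Integrable (erwG η m n) μ := by
    intro n
    refine Integrable.mono' (integrable_const ((m : ℝ) + n)) (hmeasG n).aestronglyMeasurable ?_
    refine ae_of_all _ fun ω => ?_
    rw [Real.norm_eq_abs, abs_of_nonneg (erwG_nonneg m n ω)]
    exact erwG_le h.pm m n ω
  -- the one-step supermartingale inequality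
  have hstep : ∀ n : ℕ, μ[erwG η m (n + 1)|erwFil η (m + n)] ≤ᵐ[μ] erwG η m n := by
    intro n
    set N := m + n with hN
    have hN1 : 1 ≤ N := le_trans hm (Nat.le_add_right m n)
    set c : Ω → ℝ := fun ω =>
      if erwG η m n ω = 0 then 0 else if 0 < erwX η N ω then 1 else -1 with hc
    have hXne : ∀ ω, erwG η m n ω ≠ 0 → erwX η N ω ≠ 0 := by
      intro ω hg hX
      exact hg (by rw [erwG_of_ne_zero hg, ← hN, hX, abs_zero])
    have hdecomp : erwG η m (n + 1) = fun ω => erwG η m n ω + c ω * η (N + 1) ω := by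
      funext ω
      by_cases hg : erwG η m n ω = 0
      · simp [erwG, hg, hc]
      · have hX := hXne ω hg
        have : erwG η m (n + 1) ω = |erwX η (N + 1) ω| := by
          simp only [erwG, hg, if_neg hg]
          rfl
        rw [this, erwX_abs_step h.pm hX, erwG_of_ne_zero hg, ← hN, hc]
        simp [hg]
    have hc_meas : Measurable[erwFil η N] c := by
      letI : MeasurableSpace Ω := erwFil η N
      have h1 : MeasurableSet[erwFil η N] {ω | erwG η m n ω = 0} :=
        meas_erwG_fil m n (measurableSet_singleton 0)
      have h2 : MeasurableSet[erwFil η N] {ω | 0 < erwX η N ω} :=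
        meas_erwX_fil N measurableSet_Ioi
      exact Measurable.ite h1 measurable_const
        (Measurable.ite h2 measurable_const measurable_const)
    have hc_bd : ∀ ω, |c ω| ≤ 1 := by
      intro ω
      by_cases hg : erwG η m n ω = 0 <;>
        [skip; by_cases hs : 0 < erwX η N ω] <;> simp [hc, hg, *] <;> split_ifs <;> simp
    have hint_c_eta : Integrable (c * η (N + 1)) μ := by
      refine Integrable.mono' (integrable_const (1 : ℝ))
        (((hc_meas.mono (erwFil_le h.meas N) le_rfl).mul
          (h.meas (N + 1))).aestronglyMeasurable) ?_
      refine ae_of_all _ fun ω => ?_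
      rw [Pi.mul_apply, Real.norm_eq_abs, abs_mul]
      calc |c ω| * |η (N + 1) ω| ≤ 1 * 1 := by
            refine mul_le_mul (hc_bd ω) ?_ (abs_nonneg _) zero_le_one
            rcases h.pm (N + 1) (by omega) ω with he | he <;> simp [he]
        _ = 1 := by norm_num
    -- compute the conditional expectation
    have hce : μ[erwG η m (n + 1)|erwFil η N] =ᵐ[μ]
        fun ω => erwG η m n ω + c ω * ((2 * p - 1) * erwX η N ω / N) := by
      rw [hdecomp]
      have e1 : (fun ω => erwG η m n ω + c ω * η (N + 1) ω) =
          erwG η m n + c * η (N + 1) := rfl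
      rw [e1]
      refine (condExp_add (hintG n) hint_c_eta _).trans ?_
      have e2 : μ[erwG η m n|erwFil η N] = erwG η m n :=
        condExp_of_stronglyMeasurable (erwFil_le h.meas N)
          (by letI : MeasurableSpace Ω := erwFil η N
              exact (meas_erwG_fil m n).stronglyMeasurable) (hintG n)
      have e3 : μ[c * η (N + 1)|erwFil η N] =ᵐ[μ] c * μ[η (N + 1)|erwFil η N] :=
        condExp_mul_of_stronglyMeasurable_left
          (by letI : MeasurableSpace Ω := erwFil η N
              exact hc_meas.stronglyMeasurable) hint_c_eta (hint_eta (N + 1) (by omega))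
      rw [e2]
      filter_upwards [e3, h.cond N hN1] with ω h3 h4
      rw [Pi.add_apply, h3, Pi.mul_apply, h4]
    refine hce.trans_le (ae_of_all _ fun ω => ?_)
    have hcX : c ω * erwX η N ω = erwG η m n ω := by
      by_cases hg : erwG η m n ω = 0
      · simp [hc, hg]
      · have hX := hXne ω hg
        rw [erwG_of_ne_zero hg, ← hN, hc]
        simp only [if_neg hg]
        rcases lt_or_gt_of_ne hX with hs | hs
        · rw [if_neg (not_lt.2 hs.le), abs_of_neg hs]; ring
        · rw [if_pos hs, abs_of_pos hs]; ring
    have heq : c ω * ((2 * p - 1) * erwX η N ω / N) = (2 * p - 1) * erwG η m n ω / N := by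
      rw [← hcX]; ring
    show erwG η m n ω + c ω * ((2 * p - 1) * erwX η N ω / ↑N) ≤ erwG η m n ω
    rw [heq]
    have hterm : (2 * p - 1) * erwG η m n ω / N ≤ 0 := by
      apply div_nonpos_of_nonpos_of_nonneg
      · exact mul_nonpos_of_nonpos_of_nonneg hp (erwG_nonneg m n ω)
      · positivity
    linarith
  have hadp : StronglyAdapted ℱ (erwG η m) := by
    intro n
    letI : MeasurableSpace Ω := erwFil η (m + n)
    exact (meas_erwG_fil m n).stronglyMeasurable
  have hsup : Supermartingale (erwG η m) ℱ μ :=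
    supermartingale_nat hadp hintG fun n => hstep n
  -- L¹ boundedness
  have hbdd : ∀ n, eLpNorm (erwG η m n) 1 μ ≤ (m : ℝ≥0) := by
    intro n
    have h1 : ∫ ω, erwG η m n ω ∂μ ≤ ∫ ω, erwG η m 0 ω ∂μ := by
      have := hsup.setIntegral_le (Nat.zero_le n) (MeasurableSet.univ : MeasurableSet[ℱ 0] _)
      simpa [setIntegral_univ] using this
    have h2 : ∫ ω, erwG η m 0 ω ∂μ ≤ (m : ℝ) := by
      calc ∫ ω, erwG η m 0 ω ∂μ ≤ ∫ _, (m : ℝ) ∂μ := by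
            refine integral_mono (hintG 0) (integrable_const _) fun ω => ?_
            exact abs_erwX_le h.pm m ω
        _ = (m : ℝ) := by simp
    rw [eLpNorm_one_eq_lintegral_enorm]
    have h3 : ∀ ω, ‖erwG η m n ω‖ₑ = ENNReal.ofReal (erwG η m n ω) :=
      fun ω => Real.enorm_eq_ofReal (erwG_nonneg m n ω)
    calc ∫⁻ ω, ‖erwG η m n ω‖ₑ ∂μ = ∫⁻ ω, ENNReal.ofReal (erwG η m n ω) ∂μ := by
          simp_rw [h3]
      _ = ENNReal.ofReal (∫ ω, erwG η m n ω ∂μ) :=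
          (ofReal_integral_eq_lintegral_ofReal (hintG n)
            (ae_of_all _ fun ω => erwG_nonneg m n ω)).symm
      _ ≤ ENNReal.ofReal (m : ℝ) := ENNReal.ofReal_le_ofReal (h1.trans h2)
      _ = ((m : ℝ≥0) : ℝ≥0∞) := by
          rw [ENNReal.ofReal_natCast]; simp
  -- almost sure convergence
  have hconv := hsup.neg.exists_ae_tendsto_of_bdd
    (R := (m : ℝ≥0)) (fun n => by
      show eLpNorm (-(erwG η m n)) 1 μ ≤ _
      rw [eLpNorm_neg]; exact hbdd n)
  filter_upwards [hconv] with ω hc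
  by_contra hcon
  push_neg at hcon
  have hne : ∀ k, m ≤ k → erwX η k ω ≠ 0 := fun k hk => hcon k hk
  obtain ⟨L, hL⟩ := hc
  have hdiff : Tendsto (fun n => (-erwG η m) (n + 1) ω - (-erwG η m) n ω) atTop (𝓝 0) := by
    have := (hL.comp (tendsto_add_atTop_nat 1)).sub hL
    simpa using this
  have h1 : ∀ n : ℕ, |(-erwG η m) (n + 1) ω - (-erwG η m) n ω| = 1 := by
    intro n
    have hg : ∀ k, erwG η m k ω = |erwX η (m + k) ω| := fun k => erwG_step m k ω hne
    have hXne : erwX η (m + n) ω ≠ 0 := hne (m + n) (Nat.le_add_right m n)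
    have : erwG η m (n + 1) ω - erwG η m n ω =
        (if 0 < erwX η (m + n) ω then (1 : ℝ) else -1) * η (m + n + 1) ω := by
      rw [hg (n + 1), hg n, (by omega : m + (n + 1) = (m + n) + 1),
        erwX_abs_step h.pm hXne]
      ring
    have e : |erwG η m (n + 1) ω - erwG η m n ω| = 1 := by
      rw [this, abs_mul]
      rcases h.pm (m + n + 1) (by omega) ω with he | he <;>
        by_cases hs : 0 < erwX η (m + n) ω <;> simp [he, hs]
    calc |(-erwG η m) (n + 1) ω - (-erwG η m) n ω|
        = |erwG η m (n + 1) ω - erwG η m n ω| := by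
          simp only [Pi.neg_apply]; rw [← abs_neg]; ring_nf
      _ = 1 := e
  have := hdiff.eventually (eventually_abs_sub_lt 0 (by norm_num : (0:ℝ) < 1/2))
  obtain ⟨n, hn⟩ := this.exists
  rw [sub_zero] at hn
  rw [h1 n] at hn
  norm_num at hn

end main

open ProbabilityTheory in
/-- For the ERW with `p < 1/6`, conditionally on `{X m = x}` with `x ≠ 0` and
`P(X m = x) > 0`, the hitting time `τ₀ = inf {n ≥ m : X n = 0}` of the origin is
almost surely finite: the elephant random walk is positive recurrent. -/
theorem erw_positive_recurrent
    {Ω : Type*} [MeasurableSpace Ω] {μ : Measure Ω} {p r : ℝ} {η : ℕ → Ω → ℝ}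
    (h : IsERW μ p r η) (hp : p < 1 / 6) (m : ℕ) (hm : 1 ≤ m)
    (x : ℤ) (hx : x ≠ 0) (hpos : μ {ω | erwX η m ω = (x : ℝ)} ≠ 0) :
    ∀ᵐ ω ∂(μ[|{ω | erwX η m ω = (x : ℝ)}]), ∃ n : ℕ, m ≤ n ∧ erwX η n ω = 0 :=
  (cond_absolutelyContinuous).ae_le (erw_hits h (by linarith) m hm)
end

section
/- For the uniform-memory elephant random walk defined by the explicit construction, for every n ≥ 1, almost surely E[η_{n+1} | η_1, …, η_n] = (2p−1) X_n / n. -/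
open MeasureTheory Filter

/-- Index type for the independent sources of randomness of the explicit construction:
the first step `η 1`, the uniform memory indices `(K n)_{n ≥ 1}` and the
copy/flip variables `(β n)_{n ≥ 2}`. -/
def ERWSourceIdx : Type := Unit ⊕ {n : ℕ // 1 ≤ n} ⊕ {n : ℕ // 2 ≤ n}

/-- Codomains of the independent sources of randomness. -/
def ERWSourceCodom : ERWSourceIdx → Type
  | .inl _ => ℝ
  | .inr (.inl _) => ℕ
  | .inr (.inr _) => ℝ

instance ERWSourceCodomMS : ∀ i, MeasurableSpace (ERWSourceCodom i)
  | .inl _ => Real.measurableSpace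
  | .inr (.inl _) => inferInstanceAs (MeasurableSpace ℕ)
  | .inr (.inr _) => Real.measurableSpace

/-- The family of independent sources of randomness, built from `η 1`, `K` and `β`. -/
def erwSources {Ω : Type*} (η : ℕ → Ω → ℝ) (K : ℕ → Ω → ℕ) (β : ℕ → Ω → ℝ) :
    ∀ i : ERWSourceIdx, Ω → ERWSourceCodom i
  | .inl _ => η 1
  | .inr (.inl n) => K n.1
  | .inr (.inr n) => β n.1

/-- Auxiliary predicate: the sources with index "at most n". -/
def erwIdxLe (n : ℕ) : ERWSourceIdx → Prop
  | .inl _ => True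
  | .inr (.inl k) => k.1 < n
  | .inr (.inr m) => m.1 ≤ n

/-- A random variable taking values `1` with probability `q` and `-1` with
probability `1 - q` is a.s. in `{1, -1}`. -/
lemma erw_aux_pm {Ω : Type*} [MeasurableSpace Ω] (μ : Measure Ω) [IsProbabilityMeasure μ]
    (f : Ω → ℝ) (hf : Measurable f) (q : ℝ) (hq : q ∈ Set.Icc (0 : ℝ) 1)
    (h1 : μ {ω | f ω = 1} = ENNReal.ofReal q)
    (h2 : μ {ω | f ω = -1} = ENNReal.ofReal (1 - q)) :
    ∀ᵐ ω ∂μ, f ω = 1 ∨ f ω = -1 := by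
  have hA : MeasurableSet {ω | f ω = 1} := hf (measurableSet_singleton 1)
  have hB : MeasurableSet {ω | f ω = -1} := hf (measurableSet_singleton (-1))
  have hdisj : Disjoint {ω | f ω = 1} {ω | f ω = -1} := by
    rw [Set.disjoint_left]
    intro ω hω1 hω2
    simp only [Set.mem_setOf_eq] at hω1 hω2
    rw [hω1] at hω2; norm_num at hω2
  have hU : μ ({ω | f ω = 1} ∪ {ω | f ω = -1}) = 1 := by
    rw [measure_union hdisj hB, h1, h2, ← ENNReal.ofReal_add hq.1 (by linarith [hq.2])]
    norm_num
  have hcompl : μ ({ω | f ω = 1} ∪ {ω | f ω = -1})ᶜ = 0 := by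
    rw [measure_compl (hA.union hB) (measure_ne_top μ _), hU, measure_univ, tsub_self]
  have hset : {ω | ¬(f ω = 1 ∨ f ω = -1)} = ({ω | f ω = 1} ∪ {ω | f ω = -1})ᶜ := by
    ext ω; simp [not_or]
  rw [ae_iff, hset]
  exact hcompl

open ProbabilityTheory in
/-- Explicit construction of the uniform-memory ERW: `η 1`, `(K n)_{n ≥ 1}` and
`(β n)_{n ≥ 2}` mutually independent, `P(η 1 = 1) = r = 1 - P(η 1 = -1)`, `K n` uniform
on `{1, …, n}`, `P(β n = 1) = p = 1 - P(β n = -1)`, and `η (n+1) = β (n+1) * η (K n)`.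
Then for every `n ≥ 1`, almost surely `E[η (n+1) | η 1, …, η n] = (2p-1) X n / n`. -/
theorem erw_explicit_conditional_expectation
    {Ω : Type*} [MeasurableSpace Ω] (μ : Measure Ω) [IsProbabilityMeasure μ]
    (p r : ℝ) (hp : p ∈ Set.Icc (0 : ℝ) 1) (hr : r ∈ Set.Icc (0 : ℝ) 1)
    (η : ℕ → Ω → ℝ) (K : ℕ → Ω → ℕ) (β : ℕ → Ω → ℝ)
    (hηm : ∀ k, Measurable (η k)) (hKm : ∀ n, Measurable (K n))
    (hβm : ∀ n, Measurable (β n))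
    (hη1 : μ {ω | η 1 ω = 1} = ENNReal.ofReal r ∧
      μ {ω | η 1 ω = -1} = ENNReal.ofReal (1 - r))
    (hKrange : ∀ n, 1 ≤ n → ∀ ω, K n ω ∈ Finset.Icc 1 n)
    (hKunif : ∀ n, 1 ≤ n → ∀ k ∈ Finset.Icc 1 n, μ {ω | K n ω = k} = 1 / n)
    (hβlaw : ∀ n, 2 ≤ n → μ {ω | β n ω = 1} = ENNReal.ofReal p ∧
      μ {ω | β n ω = -1} = ENNReal.ofReal (1 - p))
    (hindep : iIndepFun (m := ERWSourceCodomMS) (erwSources η K β) μ)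
    (hrec : ∀ n, 1 ≤ n → ∀ ω, η (n + 1) ω = β (n + 1) ω * η (K n ω) ω)
    (n : ℕ) (hn : 1 ≤ n) :
    μ[η (n + 1)|erwFil η n] =ᵐ[μ] fun ω => (2 * p - 1) * erwX η n ω / n := by
  classical
  rename_i m0 hPM
  set src := erwSources η K β with hsrc_def
  set cm : ERWSourceIdx → MeasurableSpace Ω :=
    fun i => MeasurableSpace.comap (src i) (ERWSourceCodomMS i) with hcm_def
  have hsrc_meas : ∀ i, Measurable (src i) := by
    rintro (u | k | m)
    · exact hηm 1
    · exact hKm k.1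
    · exact hβm m.1
  have h_le : ∀ i, cm i ≤ m0 := fun i =>
    measurable_iff_comap_le.mp (hsrc_meas i)
  set S : Set ERWSourceIdx := {i | erwIdxLe n i} with hS_def
  set mS : MeasurableSpace Ω := ⨆ i ∈ S, cm i with hmS_def
  set mT : MeasurableSpace Ω := ⨆ i ∈ Sᶜ, cm i with hmT_def
  letI amb : MeasurableSpace Ω := m0
  have hmS_le : mS ≤ m0 := iSup₂_le fun i _ => h_le i
  have hmT_le : mT ≤ m0 := iSup₂_le fun i _ => h_le i
  have hcmS : ∀ i, erwIdxLe n i → cm i ≤ mS := fun i hi => le_biSup cm hi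
  have hcmT : ∀ i, ¬ erwIdxLe n i → cm i ≤ mT := fun i hi => le_biSup cm hi
  -- measurability of individual sources with respect to mS / mT
  have hmS_η1 : Measurable[mS] (η 1) :=
    measurable_iff_comap_le.mpr (hcmS (Sum.inl ()) trivial)
  have hmS_K : ∀ j, 1 ≤ j → j < n → Measurable[mS] (K j) := fun j hj1 hjn =>
    measurable_iff_comap_le.mpr (hcmS (Sum.inr (Sum.inl ⟨j, hj1⟩)) hjn)
  have hmS_β : ∀ m, 2 ≤ m → m ≤ n → Measurable[mS] (β m) := fun m hm2 hmn =>
    measurable_iff_comap_le.mpr (hcmS (Sum.inr (Sum.inr ⟨m, hm2⟩)) hmn)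
  have hmT_Kn : Measurable[mT] (K n) :=
    measurable_iff_comap_le.mpr (hcmT (Sum.inr (Sum.inl ⟨n, hn⟩)) (by show ¬(n < n); omega))
  have hmT_βn1 : Measurable[mT] (β (n + 1)) :=
    measurable_iff_comap_le.mpr
      (hcmT (Sum.inr (Sum.inr ⟨n + 1, by omega⟩)) (by show ¬(n + 1 ≤ n); omega))
  -- mS ⊥ mT
  have hIndepST : Indep mS mT μ := indep_biSup_compl h_le hindep S
  -- η k is mS-measurable for 1 ≤ k ≤ n
  have hmeas_η : ∀ k, 1 ≤ k → k ≤ n → Measurable[mS] (η k) := by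
    intro k
    induction k using Nat.strong_induction_on with
    | _ k ih =>
      intro hk1 hkn
      rcases eq_or_lt_of_le hk1 with h1 | h1
      · rw [← h1]; exact hmS_η1
      · obtain ⟨j, rfl⟩ : ∃ j, k = j + 1 := ⟨k - 1, by omega⟩
        have hj1 : 1 ≤ j := by omega
        have hjn : j < n := by omega
        have heq : η (j + 1) = fun ω => ∑ i ∈ Finset.Icc 1 j,
            Set.indicator (K j ⁻¹' {i}) (fun ω' => β (j + 1) ω' * η i ω') ω := by
          funext ω
          have hKr := hKrange j hj1 ω
          rw [hrec j hj1 ω]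
          have hterm : ∀ i, Set.indicator (K j ⁻¹' {i})
              (fun ω' => β (j + 1) ω' * η i ω') ω
              = if K j ω = i then β (j + 1) ω * η i ω else 0 := fun i => by
            simp [Set.indicator_apply]
          simp only [hterm]
          rw [Finset.sum_ite_eq (Finset.Icc 1 j) (K j ω)
            (fun i => β (j + 1) ω * η i ω), if_pos hKr]
        rw [heq]
        refine Finset.measurable_sum _ fun i hi => ?_
        obtain ⟨hi1, hi2⟩ := Finset.mem_Icc.mp hi
        exact Measurable.indicator
          ((hmS_β (j + 1) (by omega) (by omega)).mul (ih i (by omega) hi1 (by omega)))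
          (hmS_K j hj1 hjn (measurableSet_singleton i))
  -- the filtration is below mS
  have hG_le_mS : erwFil η n ≤ mS := by
    refine iSup₂_le fun k hk => ?_
    obtain ⟨hk1, hk2⟩ := Finset.mem_Icc.mp hk
    exact measurable_iff_comap_le.mp (hmeas_η k hk1 hk2)
  have hG_le : erwFil η n ≤ m0 := hG_le_mS.trans hmS_le
  have hIndepTG : Indep mT (erwFil η n) μ :=
    indep_of_indep_of_le_right hIndepST.symm hG_le_mS
  -- a.s. the steps are ±1
  have hβpm : ∀ m, 2 ≤ m → ∀ᵐ ω ∂μ, β m ω = 1 ∨ β m ω = -1 := fun m hm =>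
    erw_aux_pm μ (β m) (hβm m) p hp (hβlaw m hm).1 (hβlaw m hm).2
  have hηpm : ∀ k, 1 ≤ k → ∀ᵐ ω ∂μ, η k ω = 1 ∨ η k ω = -1 := by
    intro k
    induction k using Nat.strong_induction_on with
    | _ k ih =>
      intro hk1
      rcases eq_or_lt_of_le hk1 with h1 | h1
      · rw [← h1]; exact erw_aux_pm μ (η 1) (hηm 1) r hr hη1.1 hη1.2
      · obtain ⟨j, rfl⟩ : ∃ j, k = j + 1 := ⟨k - 1, by omega⟩
        have hj1 : 1 ≤ j := by omega
        have hall : ∀ᵐ ω ∂μ, ∀ i ∈ Finset.Icc 1 j, η i ω = 1 ∨ η i ω = -1 := by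
          refine (Finset.eventually_all _).mpr fun i hi => ?_
          obtain ⟨hi1, hi2⟩ := Finset.mem_Icc.mp hi
          exact ih i (by omega) hi1
        filter_upwards [hβpm (j + 1) (by omega), hall] with ω hb ha
        rw [hrec j hj1 ω]
        have hKη := ha (K j ω) (hKrange j hj1 ω)
        rcases hb with hb | hb <;> rcases hKη with hh | hh <;>
          rw [hb, hh] <;> norm_num
  -- integrability from a.s. boundedness
  have hbd_int : ∀ f : Ω → ℝ, Measurable f → (∀ᵐ ω ∂μ, ‖f ω‖ ≤ 1) → Integrable f μ :=
    fun f hf hb => (integrable_const (1 : ℝ)).mono' hf.aestronglyMeasurable hb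
  have hηbd : ∀ k, 1 ≤ k → ∀ᵐ ω ∂μ, ‖η k ω‖ ≤ 1 := fun k hk => by
    filter_upwards [hηpm k hk] with ω h
    rcases h with h | h <;> rw [h] <;> norm_num
  have hβbd : ∀ᵐ ω ∂μ, ‖β (n + 1) ω‖ ≤ 1 := by
    filter_upwards [hβpm (n + 1) (by omega)] with ω h
    rcases h with h | h <;> rw [h] <;> norm_num
  -- the auxiliary functions
  set hfun : ℕ → Ω → ℝ :=
    fun k ω => β (n + 1) ω * Set.indicator (K n ⁻¹' {k}) (fun _ => (1 : ℝ)) ω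
    with hfun_def
  have hfun_meas : ∀ k, Measurable (hfun k) := fun k =>
    (hβm (n + 1)).mul (measurable_const.indicator (hKm n (measurableSet_singleton k)))
  have hind_bd : ∀ k ω, ‖Set.indicator (K n ⁻¹' {k}) (fun _ => (1 : ℝ)) ω‖ ≤ 1 := by
    intro k ω
    by_cases h : ω ∈ K n ⁻¹' {k} <;> simp [Set.indicator_apply, h]
  have hfun_bd : ∀ k, ∀ᵐ ω ∂μ, ‖hfun k ω‖ ≤ 1 := fun k => by
    filter_upwards [hβbd] with ω hb
    rw [hfun_def]
    calc ‖β (n + 1) ω * Set.indicator (K n ⁻¹' {k}) (fun _ => (1 : ℝ)) ω‖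
        = ‖β (n + 1) ω‖ * ‖Set.indicator (K n ⁻¹' {k}) (fun _ => (1 : ℝ)) ω‖ :=
          norm_mul _ _
      _ ≤ 1 * 1 := mul_le_mul hb (hind_bd k ω) (norm_nonneg _) zero_le_one
      _ = 1 := one_mul 1
  have hfun_int : ∀ k, Integrable (hfun k) μ := fun k =>
    hbd_int _ (hfun_meas k) (hfun_bd k)
  have hterm_int : ∀ k, 1 ≤ k → Integrable (fun ω => η k ω * hfun k ω) μ := by
    intro k hk
    refine hbd_int _ ((hηm k).mul (hfun_meas k)) ?_
    filter_upwards [hηbd k hk, hfun_bd k] with ω h1 h2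
    calc ‖η k ω * hfun k ω‖ = ‖η k ω‖ * ‖hfun k ω‖ := norm_mul _ _
      _ ≤ 1 * 1 := mul_le_mul h1 h2 (norm_nonneg _) zero_le_one
      _ = 1 := one_mul 1
  -- hfun k is mT-strongly measurable
  have hfun_smT : ∀ k, StronglyMeasurable[mT] (hfun k) := fun k =>
    (hmT_βn1.mul
      (measurable_const.indicator (hmT_Kn (measurableSet_singleton k)))).stronglyMeasurable
  -- the integral of hfun k, for k ∈ Icc 1 n
  have hβKindep : IndepFun (β (n + 1)) (K n) μ :=
    hindep.indepFun (i := Sum.inr (Sum.inr ⟨n + 1, by omega⟩))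
      (j := Sum.inr (Sum.inl ⟨n, hn⟩)) (by intro h; injection h with h2; injection h2)
  have hintβ : ∫ ω, β (n + 1) ω ∂μ = 2 * p - 1 := by
    have hae : β (n + 1) =ᵐ[μ] fun ω =>
        Set.indicator {ω' | β (n + 1) ω' = 1} (fun _ => (1 : ℝ)) ω
          + Set.indicator {ω' | β (n + 1) ω' = -1} (fun _ => (-1 : ℝ)) ω := by
      filter_upwards [hβpm (n + 1) (by omega)] with ω h
      rcases h with h | h <;> rw [h] <;> norm_num [Set.indicator_apply, h]
    have hA : MeasurableSet {ω | β (n + 1) ω = 1} :=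
      hβm (n + 1) (measurableSet_singleton 1)
    have hB : MeasurableSet {ω | β (n + 1) ω = -1} :=
      hβm (n + 1) (measurableSet_singleton (-1))
    rw [integral_congr_ae hae, integral_add
      ((integrable_const (1 : ℝ)).indicator hA)
      ((integrable_const (-1 : ℝ)).indicator hB),
      integral_indicator_const _ hA, integral_indicator_const _ hB, measureReal_def, measureReal_def,
      (hβlaw (n + 1) (by omega)).1, (hβlaw (n + 1) (by omega)).2,
      ENNReal.toReal_ofReal hp.1, ENNReal.toReal_ofReal (by linarith [hp.2] : 0 ≤ 1 - p)]
    simp only [smul_eq_mul]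
    ring
  have hintind : ∀ k ∈ Finset.Icc 1 n,
      ∫ ω, Set.indicator (K n ⁻¹' {k}) (fun _ => (1 : ℝ)) ω ∂μ = 1 / (n : ℝ) := by
    intro k hk
    rw [integral_indicator_const _ (hKm n (measurableSet_singleton k))]
    have hμ : μ (K n ⁻¹' {k}) = 1 / n := hKunif n hn k hk
    rw [measureReal_def, hμ, smul_eq_mul, mul_one, ENNReal.toReal_div]
    simp
  have hintfun : ∀ k ∈ Finset.Icc 1 n, ∫ ω, hfun k ω ∂μ = (2 * p - 1) * (1 / n) := by
    intro k hk
    have hg : Measurable (Set.indicator ({k} : Set ℕ) (fun _ => (1 : ℝ))) :=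
      measurable_const.indicator (measurableSet_singleton k)
    have hcomp : (Set.indicator ({k} : Set ℕ) (fun _ => (1 : ℝ))) ∘ (K n)
        = fun ω => Set.indicator (K n ⁻¹' {k}) (fun _ => (1 : ℝ)) ω := by
      funext ω
      simp [Set.indicator_apply, Function.comp]
    have hIF : IndepFun (β (n + 1))
        (fun ω => Set.indicator (K n ⁻¹' {k}) (fun _ => (1 : ℝ)) ω) μ := by
      have := hβKindep.comp measurable_id hg
      rwa [hcomp] at this
    have hmul : hfun k = β (n + 1) * fun ω =>
        Set.indicator (K n ⁻¹' {k}) (fun _ => (1 : ℝ)) ω := rfl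
    rw [hmul, hIF.integral_mul_eq_mul_integral (hβm (n + 1)).aestronglyMeasurable
      ((measurable_const.indicator
        (hKm n (measurableSet_singleton k))).aestronglyMeasurable),
      hintβ, hintind k hk]
  -- conditional expectation of hfun k
  haveI : SigmaFinite (μ.trim hG_le) := inferInstance
  have hcond_hfun : ∀ k ∈ Finset.Icc 1 n,
      μ[hfun k|erwFil η n] =ᵐ[μ] fun _ => (2 * p - 1) * (1 / n) := by
    intro k hk
    refine (condExp_indep_eq hmT_le hG_le (hfun_smT k) hIndepTG).trans ?_
    refine Eventually.of_forall fun ω => ?_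
    rw [hintfun k hk]
  -- conditional expectation of each term
  have hterm : ∀ k ∈ Finset.Icc 1 n,
      μ[fun ω => η k ω * hfun k ω|erwFil η n] =ᵐ[μ]
        fun ω => η k ω * ((2 * p - 1) * (1 / n)) := by
    intro k hk
    have hsm : StronglyMeasurable[erwFil η n] (η k) :=
      (measurable_iff_comap_le.mpr
        (le_biSup (fun k => MeasurableSpace.comap (η k) Real.measurableSpace)
          hk)).stronglyMeasurable
    have h1 : μ[η k * hfun k|erwFil η n] =ᵐ[μ] η k * μ[hfun k|erwFil η n] :=
      condExp_mul_of_stronglyMeasurable_left hsm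
        (hterm_int k (Finset.mem_Icc.mp hk).1) (hfun_int k)
    refine h1.trans ?_
    filter_upwards [hcond_hfun k hk] with ω hω
    simp only [Pi.mul_apply, hω]
  -- decompose η (n+1)
  have hdecomp : η (n + 1) = ∑ k ∈ Finset.Icc 1 n, fun ω => η k ω * hfun k ω := by
    funext ω
    rw [Finset.sum_apply, hrec n hn ω]
    have hKr := hKrange n hn ω
    have hterm' : ∀ k, η k ω * hfun k ω
        = if K n ω = k then η k ω * β (n + 1) ω else 0 := fun k => by
      rw [hfun_def]
      by_cases h : K n ω = k <;> simp [Set.indicator_apply, h]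
    simp only [hterm']
    rw [Finset.sum_ite_eq (Finset.Icc 1 n) (K n ω)
      (fun k => η k ω * β (n + 1) ω), if_pos hKr]
    ring
  rw [hdecomp]
  refine (condExp_finsetSum (m := erwFil η n) fun k hk =>
    hterm_int k (Finset.mem_Icc.mp hk).1).trans ?_
  have hsum := (Finset.eventually_all (Finset.Icc 1 n)).mpr hterm
  filter_upwards [hsum] with ω hω
  rw [Finset.sum_apply]
  rw [Finset.sum_congr rfl fun k hk => hω k hk]
  rw [← Finset.sum_mul]
  show (∑ k ∈ Finset.Icc 1 n, η k ω) * ((2 * p - 1) * (1 / n))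
    = (2 * p - 1) * (∑ k ∈ Finset.Icc 1 n, η k ω) / n
  ring
end
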